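/- arXiv:1712.03196 — 2 statements merged into one kernel-verified Lean document; each statement's English description precedes it below -/
import Mathlib

section
/- For all odd integers k, k' and every graph G, Ω_k(Ω_{k'}(G)) and Ω_{k·k'}(G) are homomorphically equivalent. -/
/-- A finite graph: symmetric edge relation, loops allowed. -/
structure FinGraph where
  V : Type
  Adj : V → V → Prop
  symm : ∀ {u v : V}, Adj u v → Adj v u
  [fin : Finite V]

attribute [instance] FinGraph.fin

/-- Existence of a graph homomorphism. -/
def FinGraph.Hom (G H : FinGraph) : Prop :=
  ∃ f : G.V → H.V, ∀ {u v : G.V}, G.Adj u v → H.Adj (f u) (f v)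

/-- Homomorphic equivalence. -/
def FinGraph.HomEquiv (G H : FinGraph) : Prop := G.Hom H ∧ H.Hom G

/-- Tensor (categorical) product of graphs. -/
def FinGraph.prod (G H : FinGraph) : FinGraph where
  V := G.V × H.V
  Adj := fun a b => G.Adj a.1 b.1 ∧ H.Adj a.2 b.2
  symm := fun h => ⟨G.symm h.1, H.symm h.2⟩

/-- A walk of length `n` from `u` to `v`. -/
def FinGraph.Walk (G : FinGraph) (n : ℕ) (u v : G.V) : Prop :=
  ∃ w : ℕ → G.V, w 0 = u ∧ w n = v ∧ ∀ i < n, G.Adj (w i) (w (i+1))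

/-- The `k`-th power graph `Γ_k(G)`. -/
def FinGraph.pow (G : FinGraph) (k : ℕ) : FinGraph where
  V := G.V
  Adj := fun u v => G.Walk k u v
  symm := by
    rintro u v ⟨w, h0, hk, hadj⟩
    refine ⟨fun i => w (k - i), by simpa using hk, by simpa using h0, fun i hi => ?_⟩
    have h1 : k - (i+1) + 1 = k - i := by omega
    have h2 := hadj (k - (i+1)) (by omega)
    rw [h1] at h2
    exact G.symm h2

/-- Raw vertices for the `k`-subdivision: original vertices plus internal path
vertices `(u,v,i)` with `uv` an edge and `0 < i < k`. -/
abbrev FinGraph.SubdivRaw (G : FinGraph) (k : ℕ) : Type :=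
  G.V ⊕ {p : G.V × G.V × Fin (k+1) // G.Adj p.1 p.2.1 ∧ 0 < p.2.2.val ∧ p.2.2.val < k}

/-- Identification `(u,v,i) ~ (v,u,k-i)` of internal vertices. -/
def FinGraph.subdivRel (G : FinGraph) (k : ℕ) : G.SubdivRaw k → G.SubdivRaw k → Prop :=
  fun a b => ∃ p q, a = Sum.inr p ∧ b = Sum.inr q ∧
    p.1.1 = q.1.2.1 ∧ p.1.2.1 = q.1.1 ∧ p.1.2.2.val + q.1.2.2.val = k

/-- Adjacency on raw subdivision vertices. -/
def FinGraph.subdivAdjRaw (G : FinGraph) (k : ℕ) : G.SubdivRaw k → G.SubdivRaw k → Prop := fun a b =>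
  match a, b with
  | .inl u, .inl v => k = 1 ∧ G.Adj u v
  | .inl u, .inr p => (p.1.1 = u ∧ p.1.2.2.val = 1) ∨ (p.1.2.1 = u ∧ p.1.2.2.val = k - 1)
  | .inr p, .inl u => (p.1.1 = u ∧ p.1.2.2.val = 1) ∨ (p.1.2.1 = u ∧ p.1.2.2.val = k - 1)
  | .inr p, .inr q =>
      (p.1.1 = q.1.1 ∧ p.1.2.1 = q.1.2.1 ∧
        (p.1.2.2.val + 1 = q.1.2.2.val ∨ q.1.2.2.val + 1 = p.1.2.2.val)) ∨
      (p.1.1 = q.1.2.1 ∧ p.1.2.1 = q.1.1 ∧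
        (p.1.2.2.val + q.1.2.2.val = k + 1 ∨ p.1.2.2.val + q.1.2.2.val = k - 1))

/-- The `k`-subdivision `Λ_k(G)`: every edge replaced by a path with `k` edges. -/
def FinGraph.subdiv (G : FinGraph) (k : ℕ) : FinGraph where
  V := Quot (G.subdivRel k)
  Adj := fun x y => ∃ a b, Quot.mk _ a = x ∧ Quot.mk _ b = y ∧
    (G.subdivAdjRaw k a b ∨ G.subdivAdjRaw k b a)
  symm := fun ⟨a, b, ha, hb, h⟩ => ⟨b, a, hb, ha, h.symm⟩

/-- `A` joined to `B`: every vertex of `A` adjacent to every vertex of `B`. -/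
def FinGraph.Join (G : FinGraph) (A B : Set G.V) : Prop := ∀ a ∈ A, ∀ b ∈ B, G.Adj a b

/-- Vertices of `Ω_{2ℓ+1}(G)`: tuples `(A_0, …, A_ℓ)` of vertex subsets with `A_0`
a singleton and `A_{i-1}` joined to `A_i`. -/
abbrev FinGraph.OmegaVert (G : FinGraph) (l : ℕ) : Type :=
  {A : Fin (l+1) → Set G.V //
    (∃ v, A 0 = {v}) ∧ ∀ i : Fin l, G.Join (A i.castSucc) (A i.succ)}

/-- The graph `Ω_{2ℓ+1}(G)`, right adjoint to the `(2ℓ+1)`-st power functor. -/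
def FinGraph.omega (G : FinGraph) (l : ℕ) : FinGraph where
  V := G.OmegaVert l
  Adj := fun A B =>
    (∀ i : Fin l, A.1 i.castSucc ⊆ B.1 i.succ ∧ B.1 i.castSucc ⊆ A.1 i.succ) ∧
    G.Join (A.1 (Fin.last l)) (B.1 (Fin.last l))
  symm := fun {A B} h =>
    ⟨fun i => ⟨(h.1 i).2, (h.1 i).1⟩, fun b hb a ha => G.symm (h.2 a ha b hb)⟩

/-- A multiplicative graph. -/
def FinGraph.Multiplicative (K : FinGraph) : Prop :=
  ∀ G H : FinGraph, (G.prod H).Hom K → G.Hom K ∨ H.Hom K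

/-- A (thin) graph functor. -/
def IsGraphFunctor (F : FinGraph → FinGraph) : Prop :=
  ∀ G H : FinGraph, G.Hom H → (F G).Hom (F H)

namespace FinGraph

lemma hom_refl (G : FinGraph) : G.Hom G := ⟨id, fun h => h⟩

lemma walk_zero_iff (G : FinGraph) (u v : G.V) : G.Walk 0 u v ↔ u = v := by
  constructor
  · rintro ⟨w, h0, hn, _⟩; rw [← h0, hn]
  · rintro rfl; exact ⟨fun _ => u, rfl, rfl, fun i hi => absurd hi (Nat.not_lt_zero i)⟩

lemma walk_one {G : FinGraph} {u v : G.V} (h : G.Adj u v) : G.Walk 1 u v := by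
  refine ⟨fun i => if i = 0 then u else v, by simp, by simp, fun i hi => ?_⟩
  have : i = 0 := by omega
  subst this
  simpa using h

lemma walk_symm {G : FinGraph} {n : ℕ} {u v : G.V} (h : G.Walk n u v) : G.Walk n v u := by
  obtain ⟨w, h0, hk, hadj⟩ := h
  refine ⟨fun i => w (n - i), by simpa using hk, by simpa using h0, fun i hi => ?_⟩
  have h1 : n - (i+1) + 1 = n - i := by omega
  have h2 := hadj (n - (i+1)) (by omega)
  rw [h1] at h2
  exact G.symm h2

lemma walk_comp {G : FinGraph} {m n : ℕ} {u v x : G.V}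
    (h1 : G.Walk m u v) (h2 : G.Walk n v x) : G.Walk (m+n) u x := by
  obtain ⟨w1, h10, h1m, h1a⟩ := h1
  obtain ⟨w2, h20, h2n, h2a⟩ := h2
  refine ⟨fun i => if i ≤ m then w1 i else w2 (i - m), by simp [h10], ?_, ?_⟩
  · by_cases hn : n = 0
    · subst hn
      simp only [Nat.add_zero, le_refl, if_pos, h1m]
      rw [← h20, h2n]
    · simp only [if_neg (show ¬ m + n ≤ m by omega)]
      rw [show m + n - m = n by omega, h2n]
  · intro i hi
    simp only
    by_cases h : i + 1 ≤ m
    · rw [if_pos (by omega), if_pos h]; exact h1a i (by omega)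
    · by_cases h' : i ≤ m
      · have hi' : i = m := by omega
        subst hi'
        rw [if_pos le_rfl, if_neg h, h1m, ← h20]
        have := h2a 0 (by omega)
        simpa using this
      · rw [if_neg h', if_neg h]
        have he : i - m + 1 = i + 1 - m := by omega
        rw [← he]
        exact h2a (i - m) (by omega)

lemma walk_split {G : FinGraph} {m n : ℕ} {u x : G.V} (h : G.Walk (m+n) u x) :
    ∃ v, G.Walk m u v ∧ G.Walk n v x := by
  obtain ⟨w, h0, hmn, ha⟩ := h
  refine ⟨w m, ⟨w, h0, rfl, fun i hi => ha i (by omega)⟩,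
    ⟨fun i => w (m+i), rfl, hmn, fun i hi => ?_⟩⟩
  have := ha (m+i) (by omega)
  rwa [show m+i+1 = m+(i+1) by omega] at this

lemma walk_succ {G : FinGraph} {n : ℕ} {u v : G.V} :
    G.Walk (n+1) u v ↔ ∃ z, G.Walk n u z ∧ G.Adj z v := by
  constructor
  · intro h
    obtain ⟨z, h1, h2⟩ := walk_split h
    obtain ⟨w, h0, h1', ha⟩ := h2
    refine ⟨z, h1, ?_⟩
    have := ha 0 (by omega)
    rwa [h0, h1'] at this
  · rintro ⟨z, h1, h2⟩
    exact walk_comp h1 (walk_one h2)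

lemma walk_pad {G : FinGraph} {m : ℕ} {u v : G.V} (hm : 1 ≤ m) (h : G.Walk m u v) :
    G.Walk (m+2) u v := by
  obtain ⟨w, h0, hm', ha⟩ := h
  refine ⟨fun i => if i = 0 then w 0 else if i = 1 then w 1 else w (i-2),
    by simp [h0], ?_, ?_⟩
  · simp only
    rw [if_neg (by omega), if_neg (by omega), show m + 2 - 2 = m by omega, hm']
  · intro i hi
    simp only
    match i with
    | 0 =>
      simp only [if_pos rfl, if_neg (show (1:ℕ) ≠ 0 by omega), if_pos rfl]
      exact ha 0 (by omega)
    | 1 =>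
      simp only [if_neg (show (1:ℕ) ≠ 0 by omega), if_pos rfl,
        if_neg (show (2:ℕ) ≠ 0 by omega), if_neg (show (2:ℕ) ≠ 1 by omega)]
      exact G.symm (ha 0 (by omega))
    | (j+2) =>
      simp only [if_neg (show j+2 ≠ 0 by omega), if_neg (show j+2 ≠ 1 by omega),
        if_neg (show j+3 ≠ 0 by omega), if_neg (show j+3 ≠ 1 by omega)]
      rw [show j+2-2 = j by omega, show j+3-2 = j+1 by omega]
      exact ha j (by omega)

lemma walk_pad_even {G : FinGraph} {m : ℕ} (t : ℕ) {u v : G.V} (hm : 1 ≤ m)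
    (h : G.Walk m u v) : G.Walk (m+2*t) u v := by
  induction t with
  | zero => simpa using h
  | succ t ih =>
    have := walk_pad (by omega) ih
    rwa [show m+2*t+2 = m+2*(t+1) by omega] at this

lemma walk_pow {G : FinGraph} (k : ℕ) : ∀ (n : ℕ) (u v : G.V),
    (G.pow k).Walk n u v ↔ G.Walk (k*n) u v := by
  intro n
  induction n with
  | zero =>
    intro u v
    exact (walk_zero_iff (G.pow k) u v).trans (by rw [show k*0 = 0 by omega, walk_zero_iff]; exact Iff.rfl)
  | succ n ih =>
    intro u v
    refine (walk_succ (G := G.pow k) (u := u) (v := v)).trans ?_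
    constructor
    · rintro ⟨z, h1, h2⟩
      have h1' := (ih u z).mp h1
      have h2' : G.Walk k z v := h2
      have := walk_comp h1' h2'
      rwa [show k*n+k = k*(n+1) by ring] at this
    · intro h
      rw [show k*(n+1) = k*n+k by ring] at h
      obtain ⟨z, h1, h2⟩ := walk_split h
      exact ⟨z, (ih u z).mpr h1, h2⟩

lemma pow_pow_hom_iff (X Y : FinGraph) (k k' : ℕ) :
    ((X.pow k).pow k').Hom Y ↔ (X.pow (k*k')).Hom Y := by
  constructor
  · rintro ⟨f, hf⟩
    exact ⟨f, fun {u v} h => hf ((walk_pow (G := X) k k' u v).mpr h)⟩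
  · rintro ⟨f, hf⟩
    exact ⟨f, fun {u v} h => hf ((walk_pow (G := X) k k' u v).mp h)⟩

lemma mem_along {X Y : FinGraph} {l : ℕ} {g : X.V → (Y.omega l).V}
    (hg : ∀ {p q : X.V}, X.Adj p q → (Y.omega l).Adj (g p) (g q))
    (w : ℕ → X.V) (hw : ∀ i < l, X.Adj (w i) (w (i+1)))
    {y : Y.V} (hy : y ∈ (g (w 0)).1 0) :
    ∀ j (hj : j ≤ l), y ∈ (g (w j)).1 ⟨j, by omega⟩ := by
  intro j
  induction j with
  | zero =>
    intro hj
    exact hy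
  | succ j ih =>
    intro hj
    have hj' : j < l := by omega
    have h1 := ih (by omega)
    have h2 := ((hg (hw j hj')).1 ⟨j, hj'⟩).1
    exact h2 h1

lemma adjunction (X Y : FinGraph) (l : ℕ) :
    (X.pow (2*l+1)).Hom Y ↔ X.Hom (Y.omega l) := by
  constructor
  · rintro ⟨f, hf⟩
    have hf' : ∀ {u v : X.V}, X.Walk (2*l+1) u v → Y.Adj (f u) (f v) := fun h => hf h
    refine ⟨fun u => ⟨fun i => {y | ∃ v, X.Walk i.val u v ∧ f v = y}, ⟨f u, ?_⟩, ?_⟩, ?_⟩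
    · ext y
      simp only [Set.mem_setOf_eq, Set.mem_singleton_iff, Fin.val_zero]
      constructor
      · rintro ⟨v, hv, rfl⟩
        rw [(walk_zero_iff X u v).mp hv]
      · rintro rfl
        exact ⟨u, (walk_zero_iff X u u).mpr rfl, rfl⟩
    · rintro i y ⟨v, hv, rfl⟩ y' ⟨v', hv', rfl⟩
      rw [Fin.coe_castSucc] at hv
      rw [Fin.val_succ] at hv'
      have hi := i.isLt
      have hwalk : X.Walk (i.val + (i.val + 1) + 2*(l - i.val)) v v' :=
        walk_pad_even _ (by omega) (walk_comp (walk_symm hv) hv')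
      rw [show i.val + (i.val + 1) + 2*(l - i.val) = 2*l+1 by omega] at hwalk
      exact hf' hwalk
    · intro u u' huu'
      refine ⟨fun i => ⟨?_, ?_⟩, ?_⟩
      · rintro y ⟨v, hv, rfl⟩
        rw [Fin.coe_castSucc] at hv
        refine ⟨v, ?_, rfl⟩
        rw [Fin.val_succ]
        have := walk_comp (walk_one (X.symm huu')) hv
        rwa [Nat.add_comm] at this
      · rintro y ⟨v, hv, rfl⟩
        rw [Fin.coe_castSucc] at hv
        refine ⟨v, ?_, rfl⟩
        rw [Fin.val_succ]
        have := walk_comp (walk_one huu') hv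
        rwa [Nat.add_comm] at this
      · rintro y ⟨v, hv, rfl⟩ y' ⟨v', hv', rfl⟩
        rw [Fin.val_last] at hv hv'
        have hwalk : X.Walk (l + 1 + l) v v' :=
          walk_comp (walk_comp (walk_symm hv) (walk_one huu')) hv'
        rw [show l + 1 + l = 2*l+1 by omega] at hwalk
        exact hf' hwalk
  · rintro ⟨g, hg⟩
    choose fv hfv using fun u => (g u).2.1
    refine ⟨fv, ?_⟩
    intro u u' h
    obtain ⟨w, h0, hk, ha⟩ := (h : X.Walk (2*l+1) u u')
    have hy : fv u ∈ (g (w 0)).1 0 := by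
      rw [h0, hfv u]; rfl
    have m1 := mem_along (fun h => hg h) w (fun i hi => ha i (by omega)) hy l le_rfl
    have hy' : fv u' ∈ (g (w (2*l+1 - 0))).1 0 := by
      rw [show 2*l+1-0 = 2*l+1 by omega, hk, hfv u']; rfl
    have m2 := mem_along (g := g) (fun h => hg h) (fun i => w (2*l+1 - i))
      (fun i hi => by
        have := ha (2*l - i) (by omega)
        rw [show 2*l-i+1 = 2*l+1-i by omega] at this
        show X.Adj (w (2*l+1-i)) (w (2*l+1-(i+1)))
        rw [show 2*l+1-(i+1) = 2*l-i by omega]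
        exact X.symm this) hy' l le_rfl
    rw [show 2*l+1-l = l+1 by omega] at m2
    have hadj := hg (ha l (by omega))
    exact hadj.2 _ m1 _ m2

end FinGraph

/-- `Ω_k(Ω_{k'}(G))` is homomorphically equivalent to `Ω_{k·k'}(G)`
for odd `k = 2a+1`, `k' = 2b+1` (so `k·k' = 2(2ab+a+b)+1`). -/
theorem omega_omega (G : FinGraph) (a b : ℕ) :
    ((G.omega b).omega a).HomEquiv (G.omega (2*a*b + a + b)) := by
  have key : ∀ X : FinGraph, X.Hom ((G.omega b).omega a) ↔ X.Hom (G.omega (2*a*b+a+b)) := by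
    intro X
    rw [← FinGraph.adjunction X (G.omega b) a, ← FinGraph.adjunction (X.pow (2*a+1)) G b,
        FinGraph.pow_pow_hom_iff, show (2*a+1)*(2*b+1) = 2*(2*a*b+a+b)+1 from by ring,
        FinGraph.adjunction]
  exact ⟨(key _).mp (FinGraph.hom_refl _), (key _).mpr (FinGraph.hom_refl _)⟩
end

section
/- If G is a square-free graph (A joined to B implies |A| ≤ 1 or |B| ≤ 1), then for every odd k the graphs Λ_k(G) and Ω_k(G) are homomorphically equivalent. -/
namespace SqFree

variable (G : FinGraph) (l : ℕ)

/-- Neighborhood. -/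
def NG (u : G.V) : Set G.V := {z | G.Adj u z}

/-- The `i`-th set of the Ω-vertex associated to position `j` on edge `uv`. -/
def SS (u v : G.V) (j i : ℕ) : Set G.V :=
  if (i + j) % 2 = 0 then (if 2*l+1 ≤ i + j then NG G v else {u})
  else (if j ≤ i then NG G u else {v})

variable {G l}

lemma join_s_s {u v : G.V} (h : G.Adj u v) : G.Join {u} {v} := by
  intro a ha b hb
  rw [Set.mem_singleton_iff] at ha hb; subst ha; subst hb; exact h

lemma join_s_ng {u : G.V} : G.Join {u} (NG G u) := by
  intro a ha b hb
  rw [Set.mem_singleton_iff] at ha; subst ha; exact hb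

lemma join_ng_s {u : G.V} : G.Join (NG G u) {u} := by
  intro a ha b hb
  rw [Set.mem_singleton_iff] at hb; subst hb; exact G.symm ha

lemma sub_s_ng {u v : G.V} (h : G.Adj u v) : ({v} : Set G.V) ⊆ NG G u := by
  intro z hz; rw [Set.mem_singleton_iff] at hz; subst hz; exact h

lemma SS_zero {u v : G.V} {j : ℕ} (hj : j ≤ 2*l+1) :
    ∃ x, SS G l u v j 0 = {x} := by
  unfold SS
  by_cases hp : (0 + j) % 2 = 0
  · exact ⟨u, by rw [if_pos hp, if_neg (by omega)]⟩
  · exact ⟨v, by rw [if_neg hp, if_neg (by omega)]⟩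

lemma SS_join {u v : G.V} {j i : ℕ} (huv : 1 ≤ j → G.Adj u v)
    (hj : j ≤ 2*l+1) (hi : i + 1 ≤ l) :
    G.Join (SS G l u v j i) (SS G l u v j (i+1)) := by
  unfold SS
  split_ifs <;>
    first
      | (exfalso; omega)
      | exact join_s_ng
      | exact join_ng_s
      | exact join_s_s (huv (by omega))
      | exact join_s_s (G.symm (huv (by omega)))

lemma SS_sub1 {u v : G.V} {j i : ℕ} (huv : G.Adj u v)
    (hj : j + 1 ≤ 2*l+1) (hi : i + 1 ≤ l) :
    SS G l u v j i ⊆ SS G l u v (j+1) (i+1) := by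
  unfold SS
  split_ifs <;>
    first
      | (exfalso; omega)
      | exact Set.Subset.rfl
      | exact sub_s_ng (G.symm huv)
      | exact sub_s_ng huv

lemma SS_sub2 {u v : G.V} {j i : ℕ} (huv : G.Adj u v)
    (hj : j + 1 ≤ 2*l+1) (hi : i + 1 ≤ l) :
    SS G l u v (j+1) i ⊆ SS G l u v j (i+1) := by
  unfold SS
  split_ifs <;>
    first
      | (exfalso; omega)
      | exact Set.Subset.rfl
      | exact sub_s_ng (G.symm huv)
      | exact sub_s_ng huv

lemma SS_top {u v : G.V} {j : ℕ} (huv : G.Adj u v) (hj : j + 1 ≤ 2*l+1) :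
    G.Join (SS G l u v j l) (SS G l u v (j+1) l) := by
  unfold SS
  split_ifs <;>
    first
      | (exfalso; omega)
      | exact join_s_ng
      | exact join_ng_s
      | exact join_s_s huv
      | exact join_s_s (G.symm huv)

lemma SS_symm {u v : G.V} {j i : ℕ} (hj : j ≤ 2*l+1) :
    SS G l u v j i = SS G l v u (2*l+1 - j) i := by
  unfold SS
  split_ifs <;> first | rfl | (exfalso; omega)

lemma SS_j0 {u v w : G.V} {i : ℕ} (hi : i ≤ l) :
    SS G l u v 0 i = SS G l u w 0 i := by
  unfold SS
  split_ifs <;> first | rfl | (exfalso; omega)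


variable {G : FinGraph} {l : ℕ}

/-- The Ω-vertex at position `j` of the edge `uv`. -/
def mkOV (G : FinGraph) (l : ℕ) (u v : G.V) (j : ℕ) (hj : j ≤ 2*l+1)
    (huv : 1 ≤ j → G.Adj u v) : G.OmegaVert l :=
  ⟨fun i => SS G l u v j i.val,
   ⟨SS_zero hj, fun i => by
      have h := SS_join (l := l) huv hj (i := i.val) (by omega)
      simpa using h⟩⟩

lemma mkOV_apply (u v : G.V) (j : ℕ) (hj : j ≤ 2*l+1) (huv : 1 ≤ j → G.Adj u v)
    (i : Fin (l+1)) : (mkOV G l u v j hj huv).1 i = SS G l u v j i.val := rfl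

lemma omega_adj_step {u v : G.V} (huv : G.Adj u v) {j : ℕ} (hj : j + 1 ≤ 2*l+1)
    (h1 : 1 ≤ j → G.Adj u v) (h2 : 1 ≤ j + 1 → G.Adj u v) :
    (G.omega l).Adj (mkOV G l u v j (by omega) h1) (mkOV G l u v (j+1) hj h2) := by
  constructor
  · intro i
    constructor
    · have h := SS_sub1 (l := l) huv hj (i := i.val) (by omega)
      simpa [mkOV_apply] using h
    · have h := SS_sub2 (l := l) huv hj (i := i.val) (by omega)
      simpa [mkOV_apply] using h
  · have h := SS_top (l := l) huv hj
    simpa [mkOV_apply] using h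

lemma mkOV_symm {u v : G.V} {j : ℕ} (hj : j ≤ 2*l+1) (h1 : 1 ≤ j → G.Adj u v)
    (h2 : 1 ≤ 2*l+1-j → G.Adj v u) :
    mkOV G l u v j hj h1 = mkOV G l v u (2*l+1-j) (by omega) h2 :=
  Subtype.ext (funext fun i => SS_symm hj)

lemma mkOV_j0 {u v w : G.V} (h1 : 1 ≤ 0 → G.Adj u v) (h2 : 1 ≤ 0 → G.Adj u w) :
    mkOV G l u v 0 (by omega) h1 = mkOV G l u w 0 (by omega) h2 :=
  Subtype.ext (funext fun i => SS_j0 (by omega))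

/-- The raw map from subdivision vertices to Ω-vertices. -/
def fraw (G : FinGraph) (l : ℕ) : G.SubdivRaw (2*l+1) → G.OmegaVert l
  | .inl u => mkOV G l u u 0 (by omega) (fun h => absurd h (by omega))
  | .inr p => mkOV G l p.1.1 p.1.2.1 p.1.2.2.val (by have := p.1.2.2.isLt; omega)
      (fun _ => p.2.1)

lemma fraw_rel {a b : G.SubdivRaw (2*l+1)} (h : G.subdivRel (2*l+1) a b) :
    fraw G l a = fraw G l b := by
  obtain ⟨p, q, rfl, rfl, h1, h2, h3⟩ := h
  have hple := p.1.2.2.isLt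
  have hqle := q.1.2.2.isLt
  apply Subtype.ext
  funext i
  show SS G l p.1.1 p.1.2.1 p.1.2.2.val i.val = SS G l q.1.1 q.1.2.1 q.1.2.2.val i.val
  rw [SS_symm (j := p.1.2.2.val) (by omega), h1, h2,
    show 2*l+1 - p.1.2.2.val = q.1.2.2.val by omega]

variable {G : FinGraph} {l : ℕ}

lemma step_adj {u v : G.V} (huv : G.Adj u v) {j1 j2 : ℕ} (e : j1 + 1 = j2)
    (a1 : j1 ≤ 2*l+1) (b1 : 1 ≤ j1 → G.Adj u v) (a2 : j2 ≤ 2*l+1)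
    (b2 : 1 ≤ j2 → G.Adj u v) :
    (G.omega l).Adj (mkOV G l u v j1 a1 b1) (mkOV G l u v j2 a2 b2) := by
  subst e
  exact omega_adj_step huv a2 b1 b2

lemma fraw_adj_inl_inr (u : G.V)
    (p : {p : G.V × G.V × Fin (2*l+1+1) //
      G.Adj p.1 p.2.1 ∧ 0 < p.2.2.val ∧ p.2.2.val < 2*l+1})
    (h : (p.1.1 = u ∧ p.1.2.2.val = 1) ∨ (p.1.2.1 = u ∧ p.1.2.2.val = 2*l+1 - 1)) :
    (G.omega l).Adj (fraw G l (.inl u)) (fraw G l (.inr p)) := by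
  obtain ⟨⟨pu, pv, pj⟩, hpa, hp1, hp2⟩ := p
  simp only at h hpa hp1 hp2
  show (G.omega l).Adj (mkOV G l u u 0 (by omega) (fun h => absurd h (by omega)))
    (mkOV G l pu pv pj.val (by omega) (fun _ => hpa))
  rcases h with ⟨rfl, hj⟩ | ⟨rfl, hj⟩
  · rw [mkOV_j0 (w := pv) _ (fun h => absurd h (by omega))]
    exact step_adj hpa (by omega) _ _ _ _
  · rw [mkOV_symm (u := pu) (v := pv) (j := pj.val) (by omega) (fun _ => hpa)
      (fun _ => G.symm hpa)]
    rw [mkOV_j0 (w := pu) (fun h => absurd h (by omega)) (fun h => absurd h (by omega))]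
    exact step_adj (G.symm hpa) (by omega) (by omega) _ (by omega) _

lemma fraw_adj {a b : G.SubdivRaw (2*l+1)} (h : G.subdivAdjRaw (2*l+1) a b) :
    (G.omega l).Adj (fraw G l a) (fraw G l b) := by
  rcases a with u | p <;> rcases b with w | q
  · obtain ⟨hk, huw⟩ := h
    have hl : l = 0 := by omega
    subst hl
    refine ⟨fun i => i.elim0, ?_⟩
    show G.Join (SS G 0 u u 0 (Fin.last 0).val) (SS G 0 w w 0 (Fin.last 0).val)
    unfold SS
    norm_num
    exact join_s_s huw
  · exact fraw_adj_inl_inr u q h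
  · exact (G.omega l).symm (fraw_adj_inl_inr w p h)
  · obtain ⟨⟨pu, pv, pj⟩, hpa, hp1, hp2⟩ := p
    obtain ⟨⟨qu, qv, qj⟩, hqa, hq1, hq2⟩ := q
    simp only at h hpa hp1 hp2 hqa hq1 hq2
    show (G.omega l).Adj (mkOV G l pu pv pj.val (by omega) (fun _ => hpa))
      (mkOV G l qu qv qj.val (by omega) (fun _ => hqa))
    rcases h with ⟨rfl, rfl, e3⟩ | ⟨rfl, rfl, e3⟩
    · rcases e3 with e3 | e3
      · exact step_adj hpa e3 _ _ _ _
      · exact (G.omega l).symm (step_adj hpa e3 _ _ _ _)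
    · rw [mkOV_symm (u := pv) (v := pu) (j := qj.val) (by omega) (fun _ => hqa)
        (fun _ => G.symm hqa)]
      simp only at e3
      rcases e3 with e3 | e3
      · exact (G.omega l).symm (step_adj (G.symm hqa)
          (show (2*l+1-qj.val) + 1 = pj.val by omega) _ _ _ _)
      · exact step_adj (G.symm hqa) (show pj.val + 1 = 2*l+1-qj.val by omega) _ _ _ _

lemma hom1 : (G.subdiv (2*l+1)).Hom (G.omega l) := by
  refine ⟨Quot.lift (fraw G l) (fun a b h => fraw_rel h), ?_⟩
  intro x y hxy
  obtain ⟨a, b, rfl, rfl, h | h⟩ := hxy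
  · exact fraw_adj h
  · exact (G.omega l).symm (fraw_adj h)


open Classical

variable {G : FinGraph} {l : ℕ}

/-- Nat-indexed access to the sets of an Ω-vertex. -/
def AS (A : G.OmegaVert l) (n : ℕ) : Set G.V :=
  if h : n ≤ l then A.1 ⟨n, Nat.lt_succ_of_le h⟩ else ∅

lemma AS_eq (A : G.OmegaVert l) {n : ℕ} (h : n ≤ l) :
    AS A n = A.1 ⟨n, Nat.lt_succ_of_le h⟩ := dif_pos h

/-- `A_n` is a singleton. -/
def SingAt (A : G.OmegaVert l) (n : ℕ) : Prop := ∃ x, AS A n = {x}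

noncomputable def elt0 (A : G.OmegaVert l) : G.V := A.2.1.choose

lemma AS_zero (A : G.OmegaVert l) : AS A 0 = {elt0 A} := by
  have e : (⟨0, Nat.lt_succ_of_le (Nat.zero_le l)⟩ : Fin (l+1)) = 0 := Fin.ext (by simp)
  rw [AS_eq A (Nat.zero_le l), e]
  exact A.2.1.choose_spec

lemma singAt_zero (A : G.OmegaVert l) : SingAt A 0 := ⟨elt0 A, AS_zero A⟩

lemma not_singAt_top (A : G.OmegaVert l) : ¬ SingAt A (l+1) := by
  rintro ⟨x, hx⟩
  rw [AS, dif_neg (by omega)] at hx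
  exact (Set.singleton_ne_empty x) hx.symm

noncomputable def PA (A : G.OmegaVert l) : ℕ :=
  Nat.find (⟨l+1, not_singAt_top A⟩ : ∃ n, ¬ SingAt A n) - 1

lemma PA_spec (A : G.OmegaVert l) :
    1 ≤ PA A + 1 ∧ PA A ≤ l ∧ ¬ SingAt A (PA A + 1) ∧
      ∀ n ≤ PA A, SingAt A n := by
  set e : ∃ n, ¬ SingAt A n := ⟨l+1, not_singAt_top A⟩ with he
  have hfind := Nat.find_spec e
  have h1 : Nat.find e ≠ 0 := by
    intro h0
    rw [h0] at hfind
    exact hfind (singAt_zero A)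
  have h2 : Nat.find e ≤ l + 1 := Nat.find_min' e (not_singAt_top A)
  have h3 : PA A + 1 = Nat.find e := by unfold PA; omega
  refine ⟨by omega, by omega, by rw [h3]; exact hfind, fun n hn => ?_⟩
  by_contra hns
  have := Nat.find_min' e hns
  omega

lemma PA_le (A : G.OmegaVert l) : PA A ≤ l := (PA_spec A).2.1

lemma PA_sing (A : G.OmegaVert l) {n : ℕ} (h : n ≤ PA A) : SingAt A n :=
  (PA_spec A).2.2.2 n h

lemma PA_not_sing (A : G.OmegaVert l) : ¬ SingAt A (PA A + 1) :=
  (PA_spec A).2.2.1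

noncomputable def elt1 (A : G.OmegaVert l) : G.V :=
  if h : SingAt A 1 then h.choose else elt0 A

lemma AS_one (A : G.OmegaVert l) (h : SingAt A 1) : AS A 1 = {elt1 A} := by
  rw [elt1, dif_pos h]
  exact h.choose_spec

lemma sing_elt {s : Set G.V} {x y : G.V} (h : s = {x}) (hy : y ∈ s) : y = x := by
  rw [h, Set.mem_singleton_iff] at hy; exact hy

lemma adj_elt01 (A : G.OmegaVert l) (hp : PA A ≠ 0) : G.Adj (elt0 A) (elt1 A) := by
  have hl : 1 ≤ l := le_trans (by omega) (PA_le A)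
  have hJ := A.2.2 ⟨0, by omega⟩
  have h0 : A.1 (Fin.castSucc ⟨0, by omega⟩) = {elt0 A} := by
    rw [← AS_zero A, AS_eq A (Nat.zero_le l)]
    congr 1
  have h1 : A.1 (Fin.succ ⟨0, by omega⟩) = {elt1 A} := by
    rw [← AS_one A (PA_sing A (by omega)), AS_eq A hl]
    congr 1
  exact hJ (elt0 A) (by rw [h0]; rfl) (elt1 A) (by rw [h1]; rfl)

/-- The map from Ω-vertices to raw subdivision vertices. -/
noncomputable def gg (A : G.OmegaVert l) : G.SubdivRaw (2*l+1) :=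
  if hp : PA A = 0 then .inl (elt0 A)
  else if he : PA A % 2 = 0 then
    .inr ⟨(elt0 A, elt1 A, ⟨PA A, by have := PA_le A; omega⟩),
      ⟨adj_elt01 A hp, by simp only; omega, by simp only; have := PA_le A; omega⟩⟩
  else
    .inr ⟨(elt1 A, elt0 A, ⟨PA A, by have := PA_le A; omega⟩),
      ⟨G.symm (adj_elt01 A hp), by simp only; omega,
        by simp only; have := PA_le A; omega⟩⟩


variable {G : FinGraph} {l : ℕ} {A B : G.OmegaVert l}

lemma incl1 (hadj : (G.omega l).Adj A B) {n : ℕ} (h : n < l) :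
    AS A n ⊆ AS B (n+1) := by
  rw [AS_eq A (by omega), AS_eq B (by omega)]
  exact (hadj.1 ⟨n, h⟩).1

lemma incl2 (hadj : (G.omega l).Adj A B) {n : ℕ} (h : n < l) :
    AS B n ⊆ AS A (n+1) := by
  rw [AS_eq B (by omega), AS_eq A (by omega)]
  exact (hadj.1 ⟨n, h⟩).2

lemma joinAS (A : G.OmegaVert l) {n : ℕ} (h : n < l) :
    G.Join (AS A n) (AS A (n+1)) := by
  rw [AS_eq A (by omega), AS_eq A (by omega)]
  exact A.2.2 ⟨n, h⟩

lemma joinTop (hadj : (G.omega l).Adj A B) :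
    G.Join (AS A l) (AS B l) := by
  rw [AS_eq A (le_refl l), AS_eq B (le_refl l)]
  exact hadj.2

lemma elt0_mem (A : G.OmegaVert l) : elt0 A ∈ AS A 0 := by
  rw [AS_zero]; rfl

lemma nonem (hadj : (G.omega l).Adj A B) :
    ∀ n, n ≤ l → (AS A n).Nonempty ∧ (AS B n).Nonempty := by
  intro n
  induction n using Nat.strong_induction_on with
  | _ n ih =>
    intro hn
    match n, hn with
    | 0, _ => exact ⟨⟨elt0 A, elt0_mem A⟩, ⟨elt0 B, elt0_mem B⟩⟩
    | 1, h1 =>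
      exact ⟨⟨elt0 B, incl2 hadj (by omega) (elt0_mem B)⟩,
        ⟨elt0 A, incl1 hadj (by omega) (elt0_mem A)⟩⟩
    | (n+2), h2 =>
      obtain ⟨⟨x, hx⟩, ⟨y, hy⟩⟩ := ih n (by omega) (by omega)
      exact ⟨⟨x, incl2 hadj (by omega) (incl1 hadj (by omega) hx)⟩,
        ⟨y, incl1 hadj (by omega) (incl2 hadj (by omega) hy)⟩⟩

lemma sing_pull (hadj : (G.omega l).Adj A B) {n : ℕ} (h : n + 1 ≤ PA B) :
    SingAt A n := by
  have hBl := PA_le B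
  obtain ⟨x, hx⟩ := PA_sing B h
  have hsub : AS A n ⊆ AS B (n+1) := incl1 hadj (by omega)
  rw [hx] at hsub
  exact ⟨x, ((nonem hadj n (by omega)).1.subset_singleton_iff).mp hsub⟩

lemma PA_ge (hadj : (G.omega l).Adj A B) : PA B ≤ PA A + 1 := by
  by_contra h
  exact PA_not_sing A (sing_pull hadj (by omega))

lemma sing_of_sub (hs : Set.Subsingleton (s : Set G.V)) (hne : s.Nonempty) :
    ∃ x, s = {x} :=
  Set.exists_eq_singleton_iff_nonempty_subsingleton.mpr ⟨hne, hs⟩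

lemma PA_eq_imp (hsf : ∀ A B : Set G.V, G.Join A B → A.Subsingleton ∨ B.Subsingleton)
    (hadj : (G.omega l).Adj A B) (he : PA A = PA B) : PA A = l := by
  by_contra hne
  have hAl := PA_le A
  have hm : PA A < l := by omega
  have notA := PA_not_sing A
  have notB := PA_not_sing B
  rw [← he] at notB
  by_cases hc : PA A + 1 = l
  · rcases hsf _ _ (joinTop hadj) with hs | hs
    · exact notA (by rw [hc]; exact sing_of_sub hs (nonem hadj l (le_refl l)).1)
    · exact notB (by rw [hc]; exact sing_of_sub hs (nonem hadj l (le_refl l)).2)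
  · have hsub : AS A (PA A + 1) ⊆ AS B (PA A + 2) := incl1 hadj (by omega)
    rcases hsf _ _ (joinAS B (n := PA A + 1) (by omega)) with hs | hs
    · exact notB (sing_of_sub hs (nonem hadj (PA A + 1) (by omega)).2)
    · exact notA (sing_of_sub (hs.anti hsub) (nonem hadj (PA A + 1) (by omega)).1)

lemma elt_rel (hadj : (G.omega l).Adj A B) (h : 1 ≤ PA A) : elt1 A = elt0 B := by
  have hAl := PA_le A
  have hs : SingAt A 1 := PA_sing A h
  have hmem : elt0 B ∈ AS A 1 := incl2 hadj (by omega) (elt0_mem B)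
  exact (sing_elt (AS_one A hs) hmem).symm

lemma key_step (hadj : (G.omega l).Adj A B) (hq : PA B = PA A + 1) :
    G.subdivAdjRaw (2*l+1) (gg A) (gg B) := by
  have hBl := PA_le B
  have e1 : elt1 B = elt0 A := elt_rel ((G.omega l).symm hadj) (by omega)
  have hq0 : PA B ≠ 0 := by omega
  by_cases hp : PA A = 0
  · have hbo : ¬ PA B % 2 = 0 := by omega
    rw [gg, dif_pos hp, gg, dif_neg hq0, dif_neg hbo]
    exact Or.inl ⟨e1, by simp only; omega⟩
  · have e2 : elt1 A = elt0 B := elt_rel hadj (by omega)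
    by_cases hea : PA A % 2 = 0
    · have hbo : ¬ PA B % 2 = 0 := by omega
      rw [gg, dif_neg hp, dif_pos hea, gg, dif_neg hq0, dif_neg hbo]
      exact Or.inl ⟨e1.symm, e2, Or.inl (by simp only; omega)⟩
    · have hbo : PA B % 2 = 0 := by omega
      rw [gg, dif_neg hp, dif_neg hea, gg, dif_neg hq0, dif_pos hbo]
      exact Or.inl ⟨e2, e1.symm, Or.inl (by simp only; omega)⟩

lemma key_top (hadj : (G.omega l).Adj A B) (hA : PA A = l) (hB : PA B = l) :
    G.subdivAdjRaw (2*l+1) (gg A) (gg B) := by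
  by_cases hl : l = 0
  · subst hl
    rw [gg, dif_pos (by omega), gg, dif_pos (by omega)]
    exact ⟨rfl, joinTop hadj (elt0 A) (elt0_mem A) (elt0 B) (elt0_mem B)⟩
  · have e2 : elt1 A = elt0 B := elt_rel hadj (by omega)
    have e1 : elt1 B = elt0 A := elt_rel ((G.omega l).symm hadj) (by omega)
    by_cases hea : l % 2 = 0
    · rw [gg, dif_neg (by omega), dif_pos (by omega : PA A % 2 = 0),
        gg, dif_neg (by omega), dif_pos (by omega : PA B % 2 = 0)]
      exact Or.inr ⟨e1.symm, e2, Or.inr (by simp only; omega)⟩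
    · rw [gg, dif_neg (by omega), dif_neg (by omega : ¬ PA A % 2 = 0),
        gg, dif_neg (by omega), dif_neg (by omega : ¬ PA B % 2 = 0)]
      exact Or.inr ⟨e2, e1.symm, Or.inr (by simp only; omega)⟩

lemma hom2 (hsf : ∀ A B : Set G.V, G.Join A B → A.Subsingleton ∨ B.Subsingleton) :
    (G.omega l).Hom (G.subdiv (2*l+1)) := by
  refine ⟨fun A => Quot.mk _ (gg A), ?_⟩
  intro A B hadj
  refine ⟨gg A, gg B, rfl, rfl, ?_⟩
  have h1 := PA_ge hadj
  have h2 := PA_ge ((G.omega l).symm hadj)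
  by_cases he : PA A = PA B
  · have hA := PA_eq_imp hsf hadj he
    exact Or.inl (key_top hadj hA (by omega))
  · rcases (by omega : PA B = PA A + 1 ∨ PA A = PA B + 1) with h | h
    · exact Or.inl (key_step hadj h)
    · exact Or.inr (key_step ((G.omega l).symm hadj) h)

end SqFree

/-- if `G` is square-free (`A ⊴ B` implies `|A| ≤ 1` or `|B| ≤ 1`)
then `Λ_{2ℓ+1}(G)` and `Ω_{2ℓ+1}(G)` are homomorphically equivalent. -/
theorem squarefree_subdiv_equiv_omega (G : FinGraph)
    (hsf : ∀ A B : Set G.V, G.Join A B → A.Subsingleton ∨ B.Subsingleton)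
    (l : ℕ) :
    (G.subdiv (2*l+1)).HomEquiv (G.omega l) := by
  exact ⟨SqFree.hom1, SqFree.hom2 hsf⟩
end
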